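/- arXiv:1803.03228 — 2 statements merged into one kernel-verified Lean document; each statement's English description precedes it below -/
import Mathlib

section
/- Let ω = e^{2πi/3}, H the qutrit Hadamard with entries ω^{jk}/√3, S = diag(1, ω, 1), and Z = diag(1, ω, ω²). Then Z = H² S⁻¹ H² S. -/
noncomputable section
open Matrix

def ω : ℂ := Complex.exp (2 * Real.pi * Complex.I / 3)

def Hg : Matrix (Fin 3) (Fin 3) ℂ :=
  Matrix.of fun j k => ω ^ ((j : ℕ) * (k : ℕ)) / (Real.sqrt 3 : ℂ)

def Sg : Matrix (Fin 3) (Fin 3) ℂ := !![1, 0, 0; 0, ω, 0; 0, 0, 1]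

def Zg : Matrix (Fin 3) (Fin 3) ℂ := !![1, 0, 0; 0, ω, 0; 0, 0, ω ^ 2]

lemma hω3 : ω ^ 3 = 1 := by
  rw [ω, ← Complex.exp_nat_mul]
  rw [show ((3:ℕ):ℂ) * (2 * Real.pi * Complex.I / 3) = 2 * Real.pi * Complex.I by
    push_cast; ring]
  exact Complex.exp_two_pi_mul_I

lemma hωne : ω ≠ 1 := by
  intro h
  rw [ω, Complex.exp_eq_one_iff] at h
  obtain ⟨n, hn⟩ := h
  have h2 : (2 : ℂ) * Real.pi * Complex.I ≠ 0 := by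
    simp [Complex.I_ne_zero, Real.pi_ne_zero]
  have h3 : (n : ℂ) * 3 = 1 := by
    field_simp at hn
    have h4 : ((n:ℂ) * 3) * (2 * Real.pi * Complex.I) = 1 * (2 * Real.pi * Complex.I) := by
      linear_combination (-(2 * (Real.pi : ℂ) * Complex.I)) * hn
    exact mul_right_cancel₀ h2 h4
  have : (n : ℤ) * 3 = 1 := by exact_mod_cast h3
  omega

lemma hsum : ω ^ 2 + ω + 1 = 0 := by
  have h : (ω - 1) * (ω ^ 2 + ω + 1) = 0 := by linear_combination hω3
  rcases mul_eq_zero.mp h with h1 | h2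
  · exact absurd (sub_eq_zero.mp h1) hωne
  · exact h2

lemma hs3 : ((Real.sqrt 3 : ℝ) : ℂ) * ((Real.sqrt 3 : ℝ) : ℂ) = 3 := by
  rw [← Complex.ofReal_mul, Real.mul_self_sqrt (by norm_num)]; norm_num

set_option maxHeartbeats 1000000 in
lemma Hsq : Hg ^ 2 = !![1,0,0;0,0,1;0,1,0] := by
  rw [pow_two]
  ext i j
  rw [Matrix.mul_apply, Fin.sum_univ_three]
  fin_cases i <;> fin_cases j <;>
    simp only [Hg, Matrix.of_apply, Matrix.cons_val_zero, Matrix.cons_val_one,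
      Matrix.head_cons, Matrix.cons_val_two, Matrix.tail_cons, Fin.isValue,
      Matrix.cons_val', Matrix.empty_val', Matrix.cons_val_fin_one, Matrix.head_fin_const,
      Fin.val_zero, Fin.val_one, Fin.val_two] <;>
    norm_num <;> field_simp <;>
    first
      | linear_combination -hs3
      | linear_combination hsum
      | linear_combination hsum + ω * hω3
      | linear_combination (ω ^ 3 + 2) * hω3 - hs3
      | linear_combination hsum + (ω + ω ^ 2 * (ω ^ 3 + 1)) * hω3

lemma Sinv : Sg⁻¹ = !![1, 0, 0; 0, ω ^ 2, 0; 0, 0, 1] := by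
  apply Matrix.inv_eq_right_inv
  rw [Sg]
  rw [Matrix.one_fin_three]
  ext i j
  fin_cases i <;> fin_cases j <;>
    simp [Matrix.mul_apply, Fin.sum_univ_three, Matrix.vecHead, Matrix.vecTail, Function.comp] <;> linear_combination hω3

theorem Z_eq_H2_Sinv_H2_S : Zg = Hg ^ 2 * Sg⁻¹ * Hg ^ 2 * Sg := by
  rw [Hsq, Sinv, Sg, Zg]
  ext i j
  fin_cases i <;> fin_cases j <;>
    simp [Matrix.mul_apply, Fin.sum_univ_three, Matrix.vecHead, Matrix.vecTail, Function.comp]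
end
end

section
/- For an odd prime p, every element of SL(2, ℤ/p) with bottom-right entry d ≠ 0 equals Ĥ Ŝ^m Ĥ Ŝ^n Ĥ Ŝ^q where n = d, m = d⁻¹(1 − b), q = (c+1)d⁻¹, for the matrix [[a,b],[c,d]]. -/
/-- Ŝ = [[1,0],[1,1]] -/
def Shat (p : ℕ) : Matrix (Fin 2) (Fin 2) (ZMod p) := !![1, 0; 1, 1]

/-- Ĥ = [[0,−1],[1,0]] -/
def Hhat (p : ℕ) : Matrix (Fin 2) (Fin 2) (ZMod p) := !![0, -1; 1, 0]

lemma Shat_pow (p : ℕ) (n : ℕ) : Shat p ^ n = !![1, 0; (n : ZMod p), 1] := by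
  induction n with
  | zero => simp [Matrix.one_fin_two]
  | succ k ih =>
    rw [pow_succ, ih, Shat]
    push_cast
    ext i j
    fin_cases i <;> fin_cases j <;>
      simp [Matrix.mul_apply, Fin.sum_univ_two]

theorem sl2_decomposition_d_ne_zero (p : ℕ) (hp : p.Prime) (hodd : Odd p)
    (M : Matrix (Fin 2) (Fin 2) (ZMod p)) (hdet : M.det = 1) (hd : M 1 1 ≠ 0) :
    M = Hhat p * Shat p ^ ((M 1 1)⁻¹ * (1 - M 0 1)).val * Hhat p *
        Shat p ^ (M 1 1).val * Hhat p *
        Shat p ^ ((M 1 0 + 1) * (M 1 1)⁻¹).val := by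
  haveI : Fact p.Prime := ⟨hp⟩
  rw [Matrix.det_fin_two] at hdet
  set a := M 0 0
  set b := M 0 1
  set c := M 1 0
  set d := M 1 1
  rw [Shat_pow, Shat_pow, Shat_pow, ZMod.natCast_val, ZMod.natCast_val,
    ZMod.natCast_val, ZMod.cast_id, ZMod.cast_id, ZMod.cast_id]
  ext i j
  fin_cases i <;> fin_cases j <;>
    simp [Hhat, Matrix.mul_apply, Fin.sum_univ_two, show M 0 0 = a from rfl,
      show M 0 1 = b from rfl, show M 1 0 = c from rfl, show M 1 1 = d from rfl] <;>
    field_simp <;> grind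
end
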